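/- For equal-parameter multiply constant-weight codes, M(m,n,d,w) <= floor( (n^m / w^m) * M(m, n-1, d, w-1) ) for w >= 1. -/

import Mathlib

open Finset

/-- Hamming weight of a binary word. -/
def wt {n : ℕ} (x : Fin n → Bool) : ℕ := (Finset.univ.filter fun i => x i = true).card

/-- `A n d w`: max size of a binary constant-weight code of length `n`, distance `d`, weight `w`. -/
noncomputable def A (n d w : ℕ) : ℕ :=
  sSup {s | ∃ C : Finset (Fin n → Bool), C.card = s ∧
    (∀ x ∈ C, wt x = w) ∧ ∀ x ∈ C, ∀ y ∈ C, x ≠ y → d ≤ hammingDist x y}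

/-- `Aq q m d`: max size of a `q`-ary code of length `m` with minimum distance `d`. -/
noncomputable def Aq (q m d : ℕ) : ℕ :=
  sSup {s | ∃ C : Finset (Fin m → Fin q), C.card = s ∧
    ∀ x ∈ C, ∀ y ∈ C, x ≠ y → d ≤ hammingDist x y}

/-- `M m n d w`: max size of a multiply constant-weight code: `m × n` binary matrices with
constant row weight `w` and pairwise (flattened) Hamming distance at least `d`. -/
noncomputable def M (m n d w : ℕ) : ℕ :=
  sSup {s | ∃ C : Finset (Fin m → Fin n → Bool), C.card = s ∧
    (∀ x ∈ C, ∀ i, wt (x i) = w) ∧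
    ∀ x ∈ C, ∀ y ∈ C, x ≠ y → d ≤ ∑ i, hammingDist (x i) (y i)}

lemma M_bdd (m n d w : ℕ) : BddAbove {s | ∃ C : Finset (Fin m → Fin n → Bool), C.card = s ∧
    (∀ x ∈ C, ∀ i, wt (x i) = w) ∧
    ∀ x ∈ C, ∀ y ∈ C, x ≠ y → d ≤ ∑ i, hammingDist (x i) (y i)} := by
  refine ⟨Fintype.card (Fin m → Fin n → Bool), ?_⟩
  rintro s ⟨C, rfl, -, -⟩
  exact C.card_le_univ.trans (le_of_eq Finset.card_univ)

lemma M_nonempty (m n d w : ℕ) : Set.Nonempty {s | ∃ C : Finset (Fin m → Fin n → Bool),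
    C.card = s ∧ (∀ x ∈ C, ∀ i, wt (x i) = w) ∧
    ∀ x ∈ C, ∀ y ∈ C, x ≠ y → d ≤ ∑ i, hammingDist (x i) (y i)} :=
  ⟨0, ∅, rfl, by simp, by simp⟩

lemma wt_eq_sum {n : ℕ} (x : Fin n → Bool) :
    wt x = ∑ k, if x k = true then 1 else 0 := by
  rw [wt, Finset.card_filter]

lemma hammingDist_eq {n : ℕ} (x y : Fin n → Bool) :
    hammingDist x y = (Finset.univ.filter fun k => x k ≠ y k).card := rfl

def punct {m n : ℕ} (j : Fin m → Fin (n+1)) (x : Fin m → Fin (n+1) → Bool) :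
    Fin m → Fin n → Bool := fun i k => x i ((j i).succAbove k)

lemma key (m n d w : ℕ) (C : Finset (Fin m → Fin (n+1) → Bool))
    (hwt : ∀ x ∈ C, ∀ i, wt (x i) = w)
    (hd : ∀ x ∈ C, ∀ y ∈ C, x ≠ y → d ≤ ∑ i, hammingDist (x i) (y i)) :
    C.card * w ^ m ≤ (n+1) ^ m * M m n d (w - 1) := by
  have count : ∑ j : Fin m → Fin (n+1), (C.filter fun x => ∀ i, x i (j i) = true).card
      = C.card * w ^ m := by
    calc ∑ j : Fin m → Fin (n+1), (C.filter fun x => ∀ i, x i (j i) = true).card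
        = ∑ j : Fin m → Fin (n+1), ∑ x ∈ C, if (∀ i, x i (j i) = true) then 1 else 0 := by
          exact Finset.sum_congr rfl fun j _ => Finset.card_filter _ _
      _ = ∑ x ∈ C, ∑ j : Fin m → Fin (n+1), if (∀ i, x i (j i) = true) then 1 else 0 :=
          Finset.sum_comm
      _ = ∑ x ∈ C, ∏ i, wt (x i) := by
          refine Finset.sum_congr rfl fun x hx => ?_
          rw [← Finset.card_filter]
          have h1 : (Finset.univ.filter fun j : Fin m → Fin (n+1) => ∀ i, x i (j i) = true)
              = Fintype.piFinset fun i => Finset.univ.filter fun k => x i k = true := by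
            ext j
            simp only [Finset.mem_filter, Finset.mem_univ, true_and, Fintype.mem_piFinset]
          rw [h1, Fintype.card_piFinset]
          rfl
      _ = ∑ _x ∈ C, w ^ m := by
          refine Finset.sum_congr rfl fun x hx => ?_
          simp [hwt x hx]
      _ = C.card * w ^ m := by rw [Finset.sum_const, smul_eq_mul]
  have bound : ∀ j : Fin m → Fin (n+1),
      (C.filter fun x => ∀ i, x i (j i) = true).card ≤ M m n d (w - 1) := by
    intro j
    set Cj := C.filter fun x => ∀ i, x i (j i) = true with hCj
    have hinj : Set.InjOn (punct j) Cj := by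
      intro x hx y hy hxy
      simp only [hCj, Finset.coe_filter, Set.mem_setOf_eq] at hx hy
      funext i k
      rcases eq_or_ne k (j i) with rfl | hk
      · rw [hx.2 i, hy.2 i]
      · obtain ⟨k', hk'⟩ := Fin.exists_succAbove_eq hk
        have := congrFun (congrFun hxy i) k'
        simpa [punct, hk'] using this
    have hrow : ∀ x ∈ Cj, ∀ y ∈ Cj, ∀ i : Fin m,
        hammingDist (x i) (y i) = hammingDist ((punct j) x i) ((punct j) y i) := by
      intro x hx y hy i
      simp only [hCj, Finset.mem_filter] at hx hy
      rw [hammingDist_eq, hammingDist_eq, Finset.card_filter, Finset.card_filter,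
        Fin.sum_univ_succAbove (fun k => if x i k ≠ y i k then 1 else 0) (j i)]
      simp [punct, hx.2 i, hy.2 i]
      exact Finset.sum_congr rfl fun k _ => by split_ifs <;> simp_all
    have hw' : ∀ x ∈ Cj, ∀ i, wt ((punct j) x i) = w - 1 := by
      intro x hx i
      simp only [hCj, Finset.mem_filter] at hx
      have h1 : wt (x i) = w := hwt x hx.1 i
      have h2 : wt (x i) = 1 + wt ((punct j) x i) := by
        rw [wt_eq_sum, wt_eq_sum,
          Fin.sum_univ_succAbove (fun k => if x i k = true then 1 else 0) (j i)]
        simp [punct, hx.2 i]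
        rw [Finset.card_filter]
        exact Finset.sum_congr rfl fun k _ => by split_ifs <;> simp_all
      have h3 : wt ((punct j) x i) + 1 = w := by
        rw [Nat.add_comm]; exact h2.symm.trans h1
      exact Nat.eq_sub_of_add_eq h3
    have hcard : (Cj.image (punct j)).card = Cj.card := Finset.card_image_of_injOn hinj
    rw [← hcard]
    apply le_csSup (M_bdd m n d (w-1))
    refine ⟨Cj.image (punct j), rfl, ?_, ?_⟩
    · rintro x' hx'
      obtain ⟨x, hx, rfl⟩ := Finset.mem_image.mp hx'
      exact fun i => hw' x hx i
    · rintro x' hx' y' hy' hne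
      obtain ⟨x, hx, rfl⟩ := Finset.mem_image.mp hx'
      obtain ⟨y, hy, rfl⟩ := Finset.mem_image.mp hy'
      have hxy : x ≠ y := fun h => hne (by rw [h])
      have hxC : x ∈ C := (Finset.mem_filter.mp hx).1
      have hyC : y ∈ C := (Finset.mem_filter.mp hy).1
      calc d ≤ ∑ i, hammingDist (x i) (y i) := hd x hxC y hyC hxy
        _ = ∑ i, hammingDist ((punct j) x i) ((punct j) y i) :=
          Finset.sum_congr rfl fun i _ => hrow x hx y hy i
  calc C.card * w ^ m
      = ∑ j : Fin m → Fin (n+1), (C.filter fun x => ∀ i, x i (j i) = true).card := count.symm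
    _ ≤ ∑ _j : Fin m → Fin (n+1), M m n d (w - 1) :=
        Finset.sum_le_sum fun j _ => bound j
    _ = (n+1) ^ m * M m n d (w - 1) := by
        rw [Finset.sum_const, smul_eq_mul, Finset.card_univ, Fintype.card_fun]
        simp

/-- Recursive Johnson bound for MCWCs:
`M(m,n,d,w) ≤ ⌊(nᵐ/wᵐ)·M(m,n-1,d,w-1)⌋` for `w ≥ 1`. -/
theorem stmt12 (m n d w : ℕ) (hw : 1 ≤ w) :
    M m n d w ≤ n ^ m * M m (n - 1) d (w - 1) / w ^ m := by
  cases n with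
  | zero =>
    cases m with
    | zero =>
      simp only [pow_zero, one_mul, Nat.div_one]
      have h1 : M 0 0 d w ≤ 1 := by
        apply csSup_le (M_nonempty 0 0 d w)
        rintro s ⟨C, rfl, -, -⟩
        exact C.card_le_univ.trans (by simp)
      have h2 : 1 ≤ M 0 0 d (w - 1) := by
        apply le_csSup (M_bdd 0 0 d (w - 1))
        refine ⟨{fun _ _ => false}, rfl, ?_, ?_⟩
        · intro x hx i; exact absurd i.2 (by omega)
        · intro x hx y hy hxy
          simp only [Finset.mem_singleton] at hx hy
          exact absurd (hx.trans hy.symm) hxy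
      exact h1.trans h2
    | succ m =>
      have h0 : M (m+1) 0 d w ≤ 0 := by
        apply csSup_le (M_nonempty (m+1) 0 d w)
        rintro s ⟨C, rfl, hwt, -⟩
        rcases C.eq_empty_or_nonempty with rfl | ⟨x, hx⟩
        · simp
        · exfalso
          have := hwt x hx 0
          rw [wt] at this
          simp at this
          omega
      exact h0.trans (Nat.zero_le _)
  | succ n =>
    apply csSup_le (M_nonempty m (n+1) d w)
    rintro s ⟨C, rfl, h1, h2⟩
    rw [Nat.le_div_iff_mul_le (pow_pos hw m)]
    simpa using key m n d w C h1 h2
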